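/- With c_m = Σ_{q∈S} Σ_{0≤a≤q-1, gcd(a,q)=1} e^{-2πim a/q} for S ⊆ {1,...,Q}, for every κ > 0 there is C_κ such that |c_m| ≤ C_κ · d(m,Q) · Q^{1+κ}, where d(m,Q) is the number of divisors of m that are ≤ Q. -/

import Mathlib

open Finset ArithmeticFunction


/-- The Ramanujan-type exponential sums
`c_m = Σ_{q ∈ S} Σ_{0 ≤ a ≤ q-1, gcd(a,q)=1} e^{-2πi m a/q}`. -/
noncomputable def cM (S : Finset ℕ) (m : ℤ) : ℂ :=
  ∑ q ∈ S, ∑ a ∈ Finset.range q,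
    if Nat.gcd a q = 1 then
      Complex.exp (-(2 * (Real.pi : ℂ) * Complex.I * (m : ℂ) * (a : ℂ) / (q : ℂ))) else 0

/-- `d(m,Q)`: the number of divisors of `m` that are at most `Q`. -/
def divCount (m : ℤ) (Q : ℕ) : ℕ :=
  ((Finset.Icc 1 Q).filter fun q : ℕ => (q : ℤ) ∣ m).card


lemma lemA' (q : ℕ) (hq : 0 < q) (m : ℤ) :
    ∑ a ∈ Finset.range q,
      Complex.exp (-(2 * (Real.pi : ℂ) * Complex.I * (m : ℂ) * (a : ℂ) / (q : ℂ))) =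
      if (q : ℤ) ∣ m then (q : ℂ) else 0 := by
  have hq0 : (q : ℂ) ≠ 0 := Nat.cast_ne_zero.mpr hq.ne'
  set z : ℂ := Complex.exp (-(2 * (Real.pi : ℂ) * Complex.I * (m : ℂ) / (q : ℂ))) with hz
  have hpow : ∀ a : ℕ,
      Complex.exp (-(2 * (Real.pi : ℂ) * Complex.I * (m : ℂ) * (a : ℂ) / (q : ℂ))) = z ^ a := by
    intro a
    rw [hz, ← Complex.exp_nat_mul]
    congr 1
    ring
  simp_rw [hpow]
  by_cases hdvd : (q : ℤ) ∣ m
  · obtain ⟨k, hk⟩ := hdvd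
    have hz1 : z = 1 := by
      rw [hz]
      have : -(2 * (Real.pi : ℂ) * Complex.I * (m : ℂ) / (q : ℂ)) = (-k : ℤ) * (2 * Real.pi * Complex.I) := by
        rw [hk]; push_cast; field_simp
      rw [this, Complex.exp_int_mul_two_pi_mul_I]
    have hd : (q : ℤ) ∣ m := ⟨k, hk⟩
    simp [hz1, hd]
  · have hzq : z ^ q = 1 := by
      rw [hz, ← Complex.exp_nat_mul]
      have : (q : ℂ) * -(2 * (Real.pi : ℂ) * Complex.I * (m : ℂ) / (q : ℂ)) = (-m : ℤ) * (2 * Real.pi * Complex.I) := by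
        push_cast; field_simp
      rw [this, Complex.exp_int_mul_two_pi_mul_I]
    have hz1 : z ≠ 1 := by
      intro h
      rw [hz, Complex.exp_eq_one_iff] at h
      obtain ⟨n, hn⟩ := h
      apply hdvd
      refine ⟨-n, ?_⟩
      have hπ : (Real.pi : ℂ) ≠ 0 := Complex.ofReal_ne_zero.mpr Real.pi_ne_zero
      have h2πI : (2 * (Real.pi : ℂ) * Complex.I) ≠ 0 := by
        simp [hπ, Complex.I_ne_zero]
      field_simp at hn
      have h2 : (2 * (Real.pi : ℂ) * Complex.I) * (m : ℂ)
          = (2 * (Real.pi : ℂ) * Complex.I) * ((q : ℂ) * -(n : ℂ)) := by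
        linear_combination (-(2 * (Real.pi : ℂ) * Complex.I)) * hn
      have h3 : (m : ℂ) = ((q : ℤ) * -n : ℤ) := by
        push_cast
        exact mul_left_cancel₀ h2πI h2
      exact_mod_cast h3
    rw [geom_sum_eq hz1, hzq, if_neg hdvd]
    simp


lemma moebius_sum (n : ℕ) :
    ∑ d ∈ n.divisors, (ArithmeticFunction.moebius d : ℤ) = if n = 1 then 1 else 0 := by
  have h : ((ArithmeticFunction.moebius * ↑ArithmeticFunction.zeta : ArithmeticFunction ℤ)) n
      = (1 : ArithmeticFunction ℤ) n := by rw [moebius_mul_coe_zeta]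
  rw [coe_mul_zeta_apply, one_apply] at h
  exact h

lemma gcd_divisors (a q : ℕ) (hq : q ≠ 0) :
    (Nat.gcd a q).divisors = q.divisors.filter (· ∣ a) := by
  ext d
  simp only [Nat.mem_divisors, mem_filter, Nat.dvd_gcd_iff]
  constructor
  · rintro ⟨⟨h1, h2⟩, _⟩; exact ⟨⟨h2, hq⟩, h1⟩
  · rintro ⟨⟨h2, _⟩, h1⟩; exact ⟨⟨h1, h2⟩, fun h => hq (Nat.eq_zero_of_gcd_eq_zero_right h)⟩

lemma lemB0 (q : ℕ) (hq : 0 < q) (w : ℕ → ℂ) :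
    (∑ a ∈ Finset.range q, if Nat.gcd a q = 1 then w a else 0)
    = ∑ d ∈ q.divisors, (ArithmeticFunction.moebius d : ℂ) *
        ∑ b ∈ Finset.range (q / d), w (d * b) := by
  have step1 : ∀ a ∈ Finset.range q, (if Nat.gcd a q = 1 then w a else 0)
      = ∑ d ∈ q.divisors.filter (· ∣ a), (ArithmeticFunction.moebius d : ℂ) * w a := by
    intro a _
    rw [← gcd_divisors a q hq.ne', ← Finset.sum_mul]
    have h2 : (∑ d ∈ (Nat.gcd a q).divisors, ((ArithmeticFunction.moebius d : ℤ) : ℂ))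
        = if Nat.gcd a q = 1 then 1 else 0 := by
      rw [← Int.cast_sum, moebius_sum]
      split <;> simp
    rw [h2]
    split <;> simp
  rw [Finset.sum_congr rfl step1]
  simp_rw [Finset.sum_filter]
  rw [Finset.sum_comm]
  refine Finset.sum_congr rfl fun d hd => ?_
  obtain ⟨hdvd, -⟩ := Nat.mem_divisors.mp hd
  have hd0' : 0 < d := Nat.pos_of_mem_divisors hd
  have hmul : d * (q / d) = q := Nat.mul_div_cancel' hdvd
  have himg : (Finset.range q).filter (d ∣ ·) = (Finset.range (q / d)).image (fun b => d * b) := by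
    ext x
    simp only [Finset.mem_filter, Finset.mem_range, Finset.mem_image]
    constructor
    · rintro ⟨hx, b, rfl⟩
      exact ⟨b, by rw [← hmul] at hx; exact lt_of_mul_lt_mul_left hx (Nat.zero_le d), rfl⟩
    · rintro ⟨b, hb, rfl⟩
      exact ⟨by calc d * b < d * (q / d) := (Nat.mul_lt_mul_left hd0').mpr hb
                _ = q := hmul, ⟨b, rfl⟩⟩
  have hsum : (∑ a ∈ Finset.range q, if d ∣ a then (ArithmeticFunction.moebius d : ℂ) * w a else 0)
      = (ArithmeticFunction.moebius d : ℂ) * ∑ a ∈ (Finset.range q).filter (d ∣ ·), w a := by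
    rw [← Finset.sum_filter, Finset.mul_sum]
  rw [hsum, himg,
    Finset.sum_image (by intro x _ y _ h; exact Nat.eq_of_mul_eq_mul_left hd0' h)]

lemma lemB (q : ℕ) (hq : 0 < q) (m : ℤ) :
    (∑ a ∈ Finset.range q, if Nat.gcd a q = 1 then
        Complex.exp (-(2 * (Real.pi : ℂ) * Complex.I * (m : ℂ) * (a : ℂ) / (q : ℂ))) else 0)
    = ∑ d ∈ q.divisors, (ArithmeticFunction.moebius d : ℂ) *
        (if ((q / d : ℕ) : ℤ) ∣ m then ((q / d : ℕ) : ℂ) else 0) := by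
  rw [lemB0 q hq]
  refine Finset.sum_congr rfl fun d hd => ?_
  obtain ⟨hdvd, -⟩ := Nat.mem_divisors.mp hd
  have hd0' : 0 < d := Nat.pos_of_mem_divisors hd
  have hqd0 : 0 < q / d := Nat.div_pos (Nat.le_of_dvd hq hdvd) hd0'
  have hmul : d * (q / d) = q := Nat.mul_div_cancel' hdvd
  have hdc : (d : ℂ) ≠ 0 := Nat.cast_ne_zero.mpr hd0'.ne'
  have hq' : (q : ℂ) = (d : ℂ) * ((q / d : ℕ) : ℂ) := by exact_mod_cast hmul.symm
  congr 1
  have hcast : ∀ b : ℕ,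
      Complex.exp (-(2 * (Real.pi : ℂ) * Complex.I * (m : ℂ) * ((d * b : ℕ) : ℂ) / (q : ℂ)))
      = Complex.exp (-(2 * (Real.pi : ℂ) * Complex.I * (m : ℂ) * (b : ℂ) / ((q / d : ℕ) : ℂ))) := by
    intro b
    congr 1
    rw [hq']
    push_cast
    rw [neg_inj]
    have h1 : (2 * (Real.pi : ℂ) * Complex.I * (m : ℂ)) * ((d : ℂ) * (b : ℂ)) / ((d : ℂ) * ((q / d : ℕ) : ℂ))
        = (d : ℂ) * ((2 * (Real.pi : ℂ) * Complex.I * (m : ℂ)) * (b : ℂ)) / ((d : ℂ) * ((q / d : ℕ) : ℂ)) := by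
      ring
    rw [h1, mul_div_mul_left _ _ hdc]
  rw [Finset.sum_congr rfl fun b _ => hcast b, lemA' (q / d) hqd0 m]

lemma lemC (q : ℕ) (hq : 0 < q) (m : ℤ) :
    ‖∑ a ∈ Finset.range q, if Nat.gcd a q = 1 then
        Complex.exp (-(2 * (Real.pi : ℂ) * Complex.I * (m : ℂ) * (a : ℂ) / (q : ℂ))) else 0‖
    ≤ ∑ e ∈ q.divisors, (if (e : ℤ) ∣ m then (e : ℝ) else 0) := by
  rw [lemB q hq m]
  calc ‖∑ d ∈ q.divisors, (ArithmeticFunction.moebius d : ℂ) *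
        (if ((q / d : ℕ) : ℤ) ∣ m then ((q / d : ℕ) : ℂ) else 0)‖
      ≤ ∑ d ∈ q.divisors, ‖(ArithmeticFunction.moebius d : ℂ) *
        (if ((q / d : ℕ) : ℤ) ∣ m then ((q / d : ℕ) : ℂ) else 0)‖ := norm_sum_le _ _
    _ ≤ ∑ d ∈ q.divisors, (if ((q / d : ℕ) : ℤ) ∣ m then ((q / d : ℕ) : ℝ) else 0) := by
        refine Finset.sum_le_sum fun d _ => ?_
        rw [norm_mul]
        have h1 : ‖((ArithmeticFunction.moebius d : ℤ) : ℂ)‖ ≤ 1 := by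
          by_cases h : ArithmeticFunction.moebius d = 0
          · simp [h]
          · rcases ArithmeticFunction.moebius_ne_zero_iff_eq_or.mp h with h | h <;> simp [h]
        have h2 : ‖(if ((q / d : ℕ) : ℤ) ∣ m then ((q / d : ℕ) : ℂ) else 0)‖
            = (if ((q / d : ℕ) : ℤ) ∣ m then ((q / d : ℕ) : ℝ) else 0) := by
          split <;> simp
        rw [h2]
        have h3 : (0:ℝ) ≤ if ((q / d : ℕ) : ℤ) ∣ m then ((q / d : ℕ) : ℝ) else 0 := by
          split <;> positivity
        calc ‖((ArithmeticFunction.moebius d : ℤ) : ℂ)‖ *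
              (if ((q / d : ℕ) : ℤ) ∣ m then ((q / d : ℕ) : ℝ) else 0)
            ≤ 1 * (if ((q / d : ℕ) : ℤ) ∣ m then ((q / d : ℕ) : ℝ) else 0) :=
              mul_le_mul_of_nonneg_right h1 h3
          _ = _ := one_mul _
    _ = ∑ e ∈ q.divisors, (if (e : ℤ) ∣ m then (e : ℝ) else 0) :=
        Nat.sum_div_divisors q (fun e => if (e : ℤ) ∣ m then (e : ℝ) else 0)

/-- For every `κ > 0` there is `C_κ` such that `|c_m| ≤ C_κ · d(m,Q) · Q^{1+κ}`, where `d(m,Q)`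
is the number of divisors of `m` at most `Q` and `c_m` sums Ramanujan sums over `q ∈ S ⊆ {1,…,Q}`. -/
theorem stmt_8 (κ : ℝ) (hκ : 0 < κ) :
    ∃ C : ℝ, 0 < C ∧ ∀ (Q : ℕ) (S : Finset ℕ), S ⊆ Finset.Icc 1 Q → ∀ m : ℤ,
      ‖cM S m‖ ≤ C * (divCount m Q : ℝ) * (Q : ℝ) ^ ((1 : ℝ) + κ) := by
  refine ⟨1, one_pos, fun Q S hS m => ?_⟩
  rcases Nat.eq_zero_or_pos Q with rfl | hQ
  · have hSe : S = ∅ := Finset.subset_empty.mp (by simpa using hS)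
    subst hSe
    simp only [cM, Finset.sum_empty, norm_zero]
    positivity
  · have hQ1 : (1 : ℝ) ≤ (Q : ℝ) := by exact_mod_cast hQ
    have step1 : ‖cM S m‖ ≤ ∑ q ∈ S, ∑ e ∈ q.divisors,
        (if (e : ℤ) ∣ m then (e : ℝ) else 0) := by
      refine (norm_sum_le _ _).trans (Finset.sum_le_sum fun q hq => ?_)
      exact lemC q (Finset.mem_Icc.mp (hS hq)).1 m
    have hdiveq : ∀ q ∈ S, q.divisors = (Finset.Icc 1 Q).filter (· ∣ q) := by
      intro q hq
      obtain ⟨h1, h2⟩ := Finset.mem_Icc.mp (hS hq)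
      ext e
      simp only [Nat.mem_divisors, Finset.mem_filter, Finset.mem_Icc]
      constructor
      · rintro ⟨he, h0⟩
        have he1 : 1 ≤ e := Nat.one_le_iff_ne_zero.mpr fun h => by
          subst h; exact h0 (Nat.eq_zero_of_zero_dvd he)
        exact ⟨⟨he1, (Nat.le_of_dvd (by omega) he).trans h2⟩, he⟩
      · rintro ⟨-, he⟩
        exact ⟨he, by omega⟩
    have step2 : (∑ q ∈ S, ∑ e ∈ q.divisors, (if (e : ℤ) ∣ m then (e : ℝ) else 0))
        = ∑ e ∈ Finset.Icc 1 Q, ∑ q ∈ S,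
            (if e ∣ q then (if (e : ℤ) ∣ m then (e : ℝ) else 0) else 0) := by
      rw [← Finset.sum_comm]
      exact Finset.sum_congr rfl fun q hq => by rw [hdiveq q hq, Finset.sum_filter]
    have step3 : ∀ e ∈ Finset.Icc 1 Q,
        (∑ q ∈ S, if e ∣ q then (if (e : ℤ) ∣ m then (e : ℝ) else 0) else 0)
        ≤ (if (e : ℤ) ∣ m then (Q : ℝ) else 0) := by
      intro e he
      obtain ⟨he1, he2⟩ := Finset.mem_Icc.mp he
      rw [← Finset.sum_filter, Finset.sum_const, nsmul_eq_mul]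
      by_cases hm : (e : ℤ) ∣ m
      · rw [if_pos hm, if_pos hm]
        have hcard : (S.filter (e ∣ ·)).card ≤ ((Finset.Icc 1 Q).filter (e ∣ ·)).card :=
          Finset.card_le_card (Finset.filter_subset_filter _ hS)
        have hIcc : ((Finset.Icc 1 Q).filter (e ∣ ·)).card = Q / e := by
          rw [show Finset.Icc 1 Q = Finset.Ioc 0 Q from (Finset.Icc_succ_left_eq_Ioc 0 Q)]
          exact Nat.Ioc_filter_dvd_card_eq_div Q e
        have hnat : (S.filter (e ∣ ·)).card * e ≤ Q := by
          calc (S.filter (e ∣ ·)).card * e ≤ (Q / e) * e :=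
                Nat.mul_le_mul_right e (hIcc ▸ hcard)
            _ ≤ Q := Nat.div_mul_le_self Q e
        exact_mod_cast hnat
      · rw [if_neg hm, if_neg hm]
        simp
    have step4 : (∑ e ∈ Finset.Icc 1 Q, if (e : ℤ) ∣ m then (Q : ℝ) else 0)
        = (divCount m Q : ℝ) * (Q : ℝ) := by
      rw [← Finset.sum_filter, Finset.sum_const, nsmul_eq_mul, divCount]
    have step5 : (divCount m Q : ℝ) * (Q : ℝ)
        ≤ 1 * (divCount m Q : ℝ) * (Q : ℝ) ^ ((1 : ℝ) + κ) := by
      rw [one_mul]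
      refine mul_le_mul_of_nonneg_left ?_ (Nat.cast_nonneg _)
      calc (Q : ℝ) = (Q : ℝ) ^ (1 : ℝ) := (Real.rpow_one _).symm
        _ ≤ (Q : ℝ) ^ ((1 : ℝ) + κ) :=
            Real.rpow_le_rpow_of_exponent_le hQ1 (by linarith)
    calc ‖cM S m‖ ≤ _ := step1
      _ = _ := step2
      _ ≤ ∑ e ∈ Finset.Icc 1 Q, (if (e : ℤ) ∣ m then (Q : ℝ) else 0) :=
          Finset.sum_le_sum step3
      _ = (divCount m Q : ℝ) * (Q : ℝ) := step4
      _ ≤ 1 * (divCount m Q : ℝ) * (Q : ℝ) ^ ((1 : ℝ) + κ) := step5
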